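/- Let C be a compact C¹ curve in ℝ^n (n > 2) and Ω an open bounded set with C ⊆ Ω. Then 𝒟 = 𝒟_odd ∪ 𝒟_even ∪ 𝒟_∂ ∪ 𝒟_tan is a partition of 𝒟 = ℝ^n × S^{n-1} × ℝ⁺ into pairwise disjoint sets, where in particular every disc not tangent to C and with boundary disjoint from C meets C in a finite number of points. -/

import Mathlib

open MeasureTheory Set

/-- The ambient set of discs: center `p`, unit normal `u`, radius `r > 0`. -/
def discSet (n : ℕ) :
    Set (EuclideanSpace ℝ (Fin n) × EuclideanSpace ℝ (Fin n) × ℝ) :=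
  {x | ‖x.2.1‖ = 1 ∧ 0 < x.2.2}

/-- The (relatively open) disc `D(p,u,r)` determined by `x = (p,u,r)`. -/
def openDisc (n : ℕ) (x : EuclideanSpace ℝ (Fin n) × EuclideanSpace ℝ (Fin n) × ℝ) :
    Set (EuclideanSpace ℝ (Fin n)) :=
  {y | (inner ℝ (y - x.1) x.2.1 : ℝ) = 0 ∧ ‖y - x.1‖ < x.2.2}

/-- The boundary sphere `∂D(p,u,r)` of the disc determined by `x = (p,u,r)`. -/
def bdryDisc (n : ℕ) (x : EuclideanSpace ℝ (Fin n) × EuclideanSpace ℝ (Fin n) × ℝ) :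
    Set (EuclideanSpace ℝ (Fin n)) :=
  {y | (inner ℝ (y - x.1) x.2.1 : ℝ) = 0 ∧ ‖y - x.1‖ = x.2.2}

/-- Discs whose closure contains a point of the curve where the tangent is
orthogonal to the normal of the disc. -/
def tanSet (n : ℕ) (γ : ℝ → EuclideanSpace ℝ (Fin n)) :
    Set (EuclideanSpace ℝ (Fin n) × EuclideanSpace ℝ (Fin n) × ℝ) :=
  {x ∈ discSet n | ∃ s ∈ Icc (0 : ℝ) 1,
    (inner ℝ (γ s - x.1) x.2.1 : ℝ) = 0 ∧ ‖γ s - x.1‖ ≤ x.2.2 ∧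
    (inner ℝ (deriv γ s) x.2.1 : ℝ) = 0}

/-- Non-tangent discs whose boundary sphere meets the curve. -/
def bdrySet (n : ℕ) (γ : ℝ → EuclideanSpace ℝ (Fin n)) :
    Set (EuclideanSpace ℝ (Fin n) × EuclideanSpace ℝ (Fin n) × ℝ) :=
  {x ∈ discSet n \ tanSet n γ | (bdryDisc n x ∩ γ '' Icc 0 1).Nonempty}

/-- Non-tangent, non-boundary-touching discs meeting the curve an odd number of times. -/
def oddSet (n : ℕ) (γ : ℝ → EuclideanSpace ℝ (Fin n)) :
    Set (EuclideanSpace ℝ (Fin n) × EuclideanSpace ℝ (Fin n) × ℝ) :=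
  {x ∈ discSet n \ (tanSet n γ ∪ bdrySet n γ) |
    (openDisc n x ∩ γ '' Icc 0 1).Finite ∧ Odd (openDisc n x ∩ γ '' Icc 0 1).ncard}

/-- Non-tangent, non-boundary-touching discs meeting the curve an even number of times. -/
def evenSet (n : ℕ) (γ : ℝ → EuclideanSpace ℝ (Fin n)) :
    Set (EuclideanSpace ℝ (Fin n) × EuclideanSpace ℝ (Fin n) × ℝ) :=
  {x ∈ discSet n \ (tanSet n γ ∪ bdrySet n γ) |
    (openDisc n x ∩ γ '' Icc 0 1).Finite ∧ Even (openDisc n x ∩ γ '' Icc 0 1).ncard}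


open Filter in
private lemma isolated_zero19 {f : ℝ → ℝ} {s c : ℝ} (hf : HasDerivAt f c s) (hc : c ≠ 0)
    (hfs : f s = 0) : ∀ᶠ t in nhdsWithin s {s}ᶜ, f t ≠ 0 := by
  rw [hasDerivAt_iff_tendsto_slope] at hf
  filter_upwards [hf.eventually_ne hc, self_mem_nhdsWithin] with t hslope ht hft
  apply hslope
  simp [slope, hfs, hft]

private lemma finite_inter19 (n : ℕ) (γ : ℝ → EuclideanSpace ℝ (Fin n)) (hγ : ContDiff ℝ 1 γ)
    (x : EuclideanSpace ℝ (Fin n) × EuclideanSpace ℝ (Fin n) × ℝ)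
    (hx : x ∈ discSet n) (htan : x ∉ tanSet n γ) :
    (openDisc n x ∩ γ '' Icc 0 1).Finite := by
  obtain ⟨p, u, r⟩ := x
  set f : ℝ → ℝ := fun s => (inner ℝ (γ s - p) u : ℝ) with hfdef
  set K : Set ℝ := {s ∈ Icc (0:ℝ) 1 | f s = 0 ∧ ‖γ s - p‖ ≤ r} with hKdef
  have hγd : Differentiable ℝ γ := hγ.differentiable one_ne_zero
  have heq : f = (innerSL ℝ u) ∘ fun t => γ t - p :=
    funext fun t => real_inner_comm _ _
  have hder : ∀ s, HasDerivAt f (inner ℝ (deriv γ s) u : ℝ) s := by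
    intro s
    have h1 : HasDerivAt (fun t => γ t - p) (deriv γ s) s :=
      ((hγd s).hasDerivAt).sub_const p
    have h2 := ((innerSL ℝ u).hasFDerivAt (x := γ s - p)).comp_hasDerivAt s h1
    rw [heq, show (inner ℝ (deriv γ s) u : ℝ) = (innerSL ℝ u) (deriv γ s) from
      real_inner_comm _ _]
    exact h2
  have hKne : ∀ s ∈ K, (inner ℝ (deriv γ s) u : ℝ) ≠ 0 := by
    intro s hs h0
    exact htan ⟨hx, s, hs.1, hs.2.1, hs.2.2, h0⟩
  have hfc : Continuous f := heq ▸ ((innerSL ℝ u).continuous.comp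
      (hγ.continuous.sub continuous_const))
  have hKc : IsCompact K := by
    have hcl : IsClosed K := by
      have : K = Icc 0 1 ∩ (f ⁻¹' {0}) ∩ ((fun s => ‖γ s - p‖) ⁻¹' Iic r) := by
        ext s; simp [hKdef, and_assoc]
      rw [this]
      exact ((isClosed_Icc.inter (isClosed_singleton.preimage hfc)).inter
        (isClosed_Iic.preimage ((hγ.continuous.sub continuous_const).norm)))
    exact isCompact_Icc.of_isClosed_subset hcl (fun s hs => hs.1)
  have hdisc : DiscreteTopology K := by
    rw [discreteTopology_subtype_iff]
    intro s hs
    rw [Filter.inf_principal_eq_bot]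
    have := isolated_zero19 (hder s) (hKne s hs) hs.2.1
    filter_upwards [this] with t ht htK
    exact ht htK.2.1
  have hKfin : K.Finite := hKc.finite ⟨hdisc⟩
  have hsub : openDisc n (p, u, r) ∩ γ '' Icc 0 1 ⊆ γ '' K := by
    rintro y ⟨hy, s, hs, rfl⟩
    exact ⟨s, ⟨hs, hy.1, hy.2.le⟩, rfl⟩
  exact (hKfin.image γ).subset hsub


theorem stmt19 (n : ℕ) (hn : 2 < n)
    (γ : ℝ → EuclideanSpace ℝ (Fin n))
    (hγ : ContDiff ℝ 1 γ)
    (hinj : Set.InjOn γ (Set.Icc 0 1))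
    (hreg : ∀ s ∈ Set.Icc (0 : ℝ) 1, deriv γ s ≠ 0)
    (Ω : Set (EuclideanSpace ℝ (Fin n)))
    (hΩo : IsOpen Ω) (hΩb : Bornology.IsBounded Ω)
    (hCΩ : γ '' Set.Icc 0 1 ⊆ Ω) :
    (oddSet n γ ∩ evenSet n γ = ∅ ∧
     oddSet n γ ∩ bdrySet n γ = ∅ ∧
     oddSet n γ ∩ tanSet n γ = ∅ ∧
     evenSet n γ ∩ bdrySet n γ = ∅ ∧
     evenSet n γ ∩ tanSet n γ = ∅ ∧
     bdrySet n γ ∩ tanSet n γ = ∅) ∧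
    oddSet n γ ∪ evenSet n γ ∪ bdrySet n γ ∪ tanSet n γ = discSet n := by
  constructor
  · refine ⟨?_, ?_, ?_, ?_, ?_, ?_⟩
    · ext x
      simp only [mem_inter_iff, oddSet, evenSet, mem_setOf_eq, mem_empty_iff_false, iff_false]
      rintro ⟨⟨-, -, ho⟩, ⟨-, -, he⟩⟩
      exact (Nat.not_odd_iff_even.mpr he) ho
    · ext x
      simp only [mem_inter_iff, oddSet, mem_setOf_eq, mem_empty_iff_false, iff_false]
      rintro ⟨⟨⟨-, hnb⟩, -⟩, hb⟩
      exact hnb (Or.inr hb)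
    · ext x
      simp only [mem_inter_iff, oddSet, mem_setOf_eq, mem_empty_iff_false, iff_false]
      rintro ⟨⟨⟨-, hnb⟩, -⟩, ht⟩
      exact hnb (Or.inl ht)
    · ext x
      simp only [mem_inter_iff, evenSet, mem_setOf_eq, mem_empty_iff_false, iff_false]
      rintro ⟨⟨⟨-, hnb⟩, -⟩, hb⟩
      exact hnb (Or.inr hb)
    · ext x
      simp only [mem_inter_iff, evenSet, mem_setOf_eq, mem_empty_iff_false, iff_false]
      rintro ⟨⟨⟨-, hnb⟩, -⟩, ht⟩
      exact hnb (Or.inl ht)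
    · ext x
      simp only [mem_inter_iff, bdrySet, mem_setOf_eq, mem_empty_iff_false, iff_false]
      rintro ⟨⟨⟨-, hnt⟩, -⟩, ht⟩
      exact hnt ht
  · ext x
    constructor
    · rintro (((h | h) | h) | h)
      · exact h.1.1
      · exact h.1.1
      · exact h.1.1
      · exact h.1
    · intro hx
      by_cases ht : x ∈ tanSet n γ
      · exact Or.inr ht
      by_cases hb : x ∈ bdrySet n γ
      · exact Or.inl (Or.inr hb)
      have hfin := finite_inter19 n γ hγ x hx ht
      rcases Nat.even_or_odd (openDisc n x ∩ γ '' Icc 0 1).ncard with he | ho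
      · exact Or.inl (Or.inl (Or.inr ⟨⟨hx, not_or.mpr ⟨ht, hb⟩⟩, hfin, he⟩))
      · exact Or.inl (Or.inl (Or.inl ⟨⟨hx, not_or.mpr ⟨ht, hb⟩⟩, hfin, ho⟩))
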